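/- There exist an integer K > 1 and finite simple graphs G1, G2 with the same number of vertices such that the multisets {{A^{K,spd}_{v,G1} : v ∈ V(G1)}} and {{A^{K,spd}_{v,G2} : v ∈ V(G2)}} are equal (so a 1-layer K-hop message passing GNN with the shortest-path-distance kernel and constant initial features cannot distinguish G1 from G2), while K iterations of 1-WL color refinement yield different multisets of vertex colors for G1 and G2. Conversely, there exist an integer K > 1 and finite simple graphs G1', G2' with the same number of vertices such that 1-WL yields equal multisets of vertex colors at every iteration (in particular after K iterations), while the multisets {{A^{K,spd}_{v,G1'} : v}} and {{A^{K,spd}_{v,G2'} : v}} differ. -/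

import Mathlib

/-!
STATEMENT 8: Graph-level incomparability of a 1-layer K-hop (spd) scheme and K
iterations of 1-WL: there are same-size graph pairs with equal multisets of K-hop spd
node configurations but different multisets of 1-WL colors after K iterations, and
same-size graph pairs that 1-WL never distinguishes but whose multisets of K-hop spd
node configurations differ.
-/

namespace KHopStmt8

/-- k-th hop neighbors under the shortest-path-distance kernel: vertices at graph
distance exactly `k` from `v`. -/
noncomputable def Qspd {V : Type*} [Fintype V] (G : SimpleGraph V) (v : V) (k : ℕ) :
    Finset V := by
  classical
  exact Finset.univ.filter fun u => G.Reachable v u ∧ G.dist v u = k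

/-- The K-hop node configuration `A^{K,spd}_{v,G} = (|Q^1|, ..., |Q^K|)`. -/
noncomputable def config {V : Type*} [Fintype V] (K : ℕ) (G : SimpleGraph V) (v : V) :
    List ℕ :=
  (List.range K).map fun i => (Qspd G v (i + 1)).card

/-- 1-WL color refinement, expressed as a relation comparing the iteration-`l` colors
of a vertex of `G1` with a vertex of `G2`: all vertices share the constant initial
color, and `c_{l+1}(v) = (c_l(v), {{c_l(u) : u adjacent to v}})`, multiset equality
being expressed by a color-preserving bijection of neighborhoods. -/
def WLEquiv {V1 V2 : Type*} (G1 : SimpleGraph V1) (G2 : SimpleGraph V2) :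
    ℕ → V1 → V2 → Prop
  | 0, _, _ => True
  | (l + 1), v, u => WLEquiv G1 G2 l v u ∧
      ∃ σ : G1.neighborSet v ≃ G2.neighborSet u,
        ∀ w : G1.neighborSet v, WLEquiv G1 G2 l w.1 (σ w).1

/- ### Auxiliary: computable descriptions of the 1- and 2-hop sets -/

lemma Qspd_one {V : Type*} [Fintype V] [DecidableEq V] (G : SimpleGraph V)
    [DecidableRel G.Adj] (v : V) :
    Qspd G v 1 = Finset.univ.filter fun u => G.Adj v u := by
  ext u
  simp only [Qspd, Finset.mem_filter, Finset.mem_univ, true_and]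
  constructor
  · rintro ⟨-, hd⟩
    exact (SimpleGraph.dist_eq_one_iff_adj).mp hd
  · intro h
    exact ⟨h.reachable, (SimpleGraph.dist_eq_one_iff_adj).mpr h⟩

lemma Qspd_two {V : Type*} [Fintype V] [DecidableEq V] (G : SimpleGraph V)
    [DecidableRel G.Adj] (v : V) :
    Qspd G v 2 = Finset.univ.filter
      fun u => ¬ G.Adj v u ∧ v ≠ u ∧ ∃ w, G.Adj v w ∧ G.Adj w u := by
  ext u
  simp only [Qspd, Finset.mem_filter, Finset.mem_univ, true_and]
  constructor
  · rintro ⟨hr, hd⟩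
    refine ⟨?_, ?_, ?_⟩
    · intro h
      rw [(SimpleGraph.dist_eq_one_iff_adj).mpr h] at hd
      omega
    · rintro rfl
      rw [SimpleGraph.dist_self] at hd
      omega
    · obtain ⟨p, hp⟩ := hr.exists_walk_length_eq_dist
      rw [hd] at hp
      cases p with
      | nil => simp at hp
      | cons h q =>
        cases q with
        | nil => simp at hp
        | cons h2 q2 =>
          simp only [SimpleGraph.Walk.length_cons] at hp
          have h0 : q2.length = 0 := by omega
          have := SimpleGraph.Walk.eq_of_length_eq_zero h0
          subst this
          exact ⟨_, h, h2⟩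
  · rintro ⟨hna, hne, w, h1, h2⟩
    have hr : G.Reachable v u := h1.reachable.trans h2.reachable
    have hle : G.dist v u ≤ 2 := by
      have := SimpleGraph.dist_le (SimpleGraph.Walk.cons h1 h2.toWalk)
      simpa using this
    have hpos : 0 < G.dist v u := hr.pos_dist_of_ne hne
    have hne1 : G.dist v u ≠ 1 := fun h =>
      hna ((SimpleGraph.dist_eq_one_iff_adj).mp h)
    exact ⟨hr, by omega⟩

lemma config_two {V : Type*} [Fintype V] [DecidableEq V] (G : SimpleGraph V)
    [DecidableRel G.Adj] (v : V) :
    config 2 G v =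
      [(Finset.univ.filter fun u => G.Adj v u).card,
       (Finset.univ.filter fun u =>
          ¬ G.Adj v u ∧ v ≠ u ∧ ∃ w, G.Adj v w ∧ G.Adj w u).card] := by
  simp [config, List.range_succ, Qspd_one, Qspd_two]

/- ### The concrete graphs -/

/-- `K_{2,3}`: parts `{0,1}` and `{2,3,4}`. -/
def bA (a b : Fin 5) : Bool := (a ≤ 1 && 2 ≤ b) || (b ≤ 1 && 2 ≤ a)

def GA : SimpleGraph (Fin 5) where
  Adj a b := bA a b = true
  symm := ⟨by intro a b; revert a b; decide⟩
  loopless := ⟨by intro a; revert a; decide⟩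

instance : DecidableRel GA.Adj := fun a b => inferInstanceAs (Decidable (bA a b = true))

def eB : List (Fin 5 × Fin 5) := [(0,1),(0,3),(0,4),(1,2),(1,4),(2,3)]

def bB (a b : Fin 5) : Bool := (a, b) ∈ eB || (b, a) ∈ eB

def GB : SimpleGraph (Fin 5) where
  Adj a b := bB a b = true
  symm := ⟨by intro a b; revert a b; decide⟩
  loopless := ⟨by intro a; revert a; decide⟩

instance : DecidableRel GB.Adj := fun a b => inferInstanceAs (Decidable (bB a b = true))

/-- Cycle `C6`. -/
def bC (a b : Fin 6) : Bool := (a.val + 1) % 6 = b.val || (b.val + 1) % 6 = a.val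

def GC : SimpleGraph (Fin 6) where
  Adj a b := bC a b = true
  symm := ⟨by intro a b; revert a b; decide⟩
  loopless := ⟨by intro a; revert a; decide⟩

instance : DecidableRel GC.Adj := fun a b => inferInstanceAs (Decidable (bC a b = true))

/-- Two disjoint triangles. -/
def bD (a b : Fin 6) : Bool := a ≠ b && (a.val / 3 = b.val / 3)

def GD : SimpleGraph (Fin 6) where
  Adj a b := bD a b = true
  symm := ⟨by intro a b; revert a b; decide⟩
  loopless := ⟨by intro a; revert a; decide⟩

instance : DecidableRel GD.Adj := fun a b => inferInstanceAs (Decidable (bD a b = true))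

/- ### WL helper lemmas -/

lemma wl_one_degree {V1 V2 : Type*} [Fintype V1] [Fintype V2]
    {G1 : SimpleGraph V1} {G2 : SimpleGraph V2}
    [DecidableRel G1.Adj] [DecidableRel G2.Adj] {v : V1} {u : V2}
    (h : WLEquiv G1 G2 1 v u) : G1.degree v = G2.degree u := by
  obtain ⟨-, σ, -⟩ := h
  rw [← SimpleGraph.card_neighborSet_eq_degree, ← SimpleGraph.card_neighborSet_eq_degree]
  exact Fintype.card_congr σ

/-- C6 and two triangles are 1-WL equivalent at every iteration, for every vertex pair. -/
lemma wl_CD : ∀ (l : ℕ) (v u : Fin 6), WLEquiv GC GD l v u := by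
  intro l
  induction l with
  | zero => intro v u; trivial
  | succ l ih =>
    intro v u
    refine ⟨ih v u, ?_⟩
    have hcard : Fintype.card (GC.neighborSet v) = Fintype.card (GD.neighborSet u) := by
      rw [SimpleGraph.card_neighborSet_eq_degree, SimpleGraph.card_neighborSet_eq_degree]
      revert v u; decide
    exact ⟨Fintype.equivOfCardEq hcard, fun w => ih _ _⟩

/- ### Main theorem -/

/-- There exist `K > 1` and same-size graphs `G1`, `G2` whose multisets
of K-hop spd node configurations agree (so a 1-layer K-hop spd message passing GNN with
constant initial features cannot distinguish them) while K iterations of 1-WL yield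
different multisets of vertex colors; conversely there exist `K > 1` and same-size
graphs `G1'`, `G2'` that 1-WL never distinguishes (equal multisets of colors at every
iteration, in particular after K iterations) while the multisets of K-hop spd node
configurations differ. -/
theorem khop_one_layer_vs_oneWL_incomparable :
    (∃ (K n : ℕ) (G1 G2 : SimpleGraph (Fin n)), 1 < K ∧
      (Finset.univ.val.map fun v => config K G1 v) =
        (Finset.univ.val.map fun v => config K G2 v) ∧
      ¬ ∃ σ : Fin n ≃ Fin n, ∀ v, WLEquiv G1 G2 K v (σ v)) ∧
    (∃ (K n : ℕ) (G1' G2' : SimpleGraph (Fin n)), 1 < K ∧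
      (∀ l : ℕ, ∃ σ : Fin n ≃ Fin n, ∀ v, WLEquiv G1' G2' l v (σ v)) ∧
      (Finset.univ.val.map fun v => config K G1' v) ≠
        (Finset.univ.val.map fun v => config K G2' v)) := by
  constructor
  · refine ⟨2, 5, GA, GB, one_lt_two, ?_, ?_⟩
    · simp only [config_two]
      decide
    · rintro ⟨σ, hσ⟩
      -- `0` in `GA` has degree 3 and all its neighbours have degree 2
      obtain ⟨h1, τ, hτ⟩ := hσ 0
      have hdeg : GB.degree (σ 0) = 3 := by
        have := wl_one_degree h1
        have h0 : GA.degree 0 = 3 := by decide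
        omega
      -- in `GB`, every vertex of degree 3 has a neighbour of degree 3
      have hw : ∃ w, GB.Adj (σ 0) w ∧ GB.degree w = 3 := by
        have : ∀ u : Fin 5, GB.degree u = 3 → ∃ w, GB.Adj u w ∧ GB.degree w = 3 := by
          decide
        exact this _ hdeg
      obtain ⟨w, hw1, hw3⟩ := hw
      set x : GA.neighborSet (0 : Fin 5) := τ.symm ⟨w, hw1⟩ with hx
      have hwl : WLEquiv GA GB 1 x.1 w := by
        have := hτ x
        rw [hx, Equiv.apply_symm_apply] at this
        exact this
      have hdx : GA.degree x.1 = GB.degree w := wl_one_degree hwl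
      have hx2 : GA.degree x.1 = 2 := by
        have hmem : GA.Adj 0 x.1 := x.2
        have : ∀ y : Fin 5, GA.Adj 0 y → GA.degree y = 2 := by decide
        exact this _ hmem
      omega
  · refine ⟨2, 6, GC, GD, one_lt_two, ?_, ?_⟩
    · intro l
      exact ⟨Equiv.refl _, fun v => wl_CD l v v⟩
    · simp only [config_two]
      decide

end KHopStmt8
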